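/- Suppose y₁, y₂ are differentiable on I and satisfy the system (g₁−g₂)y₁' = −y₁(g₁' + f₁g₁ + f₀ + g₂g₁) − y₂(g₂' + f₁g₂ + f₀ + g₂²) − f and (g₁−g₂)y₂' = y₁(g₁' + f₁g₁ + f₀ + g₁²) + y₂(g₂' + f₁g₂ + f₀ + g₂g₁) + f, where g₁, g₂ are C¹ with g₁ ≠ g₂ pointwise. Then y := y₁ + y₂ satisfies y' = g₁y₁ + g₂y₂ and y'' + f₁y' + f₀y + f = 0. -/

import Mathlib

/-- The first-order system (13) implies `y = y₁ + y₂` solves `y'' + f₁ y' + f₀ y + f = 0`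
with `y' = g₁ y₁ + g₂ y₂`. -/
theorem stmt_1 (I : Set ℝ) (f₀ f₁ f g₁ g₂ g₁' g₂' y₁ y₂ y₁' y₂' : ℝ → ℝ)
    (hf₀ : ContinuousOn f₀ I) (hf₁ : ContinuousOn f₁ I) (hf : ContinuousOn f I)
    (hne : ∀ t ∈ I, g₁ t ≠ g₂ t)
    (hg₁ : ∀ t ∈ I, HasDerivAt g₁ (g₁' t) t) (hg₁c : ContinuousOn g₁' I)
    (hg₂ : ∀ t ∈ I, HasDerivAt g₂ (g₂' t) t) (hg₂c : ContinuousOn g₂' I)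
    (hy₁ : ∀ t ∈ I, HasDerivAt y₁ (y₁' t) t)
    (hy₂ : ∀ t ∈ I, HasDerivAt y₂ (y₂' t) t)
    (hsys₁ : ∀ t ∈ I, (g₁ t - g₂ t) * y₁' t =
      -(y₁ t * (g₁' t + f₁ t * g₁ t + f₀ t + g₂ t * g₁ t))
      - y₂ t * (g₂' t + f₁ t * g₂ t + f₀ t + (g₂ t) ^ 2) - f t)
    (hsys₂ : ∀ t ∈ I, (g₁ t - g₂ t) * y₂' t =
      y₁ t * (g₁' t + f₁ t * g₁ t + f₀ t + (g₁ t) ^ 2)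
      + y₂ t * (g₂' t + f₁ t * g₂ t + f₀ t + g₂ t * g₁ t) + f t) :
    ∀ t ∈ I,
      HasDerivAt (fun s => y₁ s + y₂ s) (g₁ t * y₁ t + g₂ t * y₂ t) t ∧
      HasDerivAt (fun s => g₁ s * y₁ s + g₂ s * y₂ s)
        (-(f₁ t * (g₁ t * y₁ t + g₂ t * y₂ t) + f₀ t * (y₁ t + y₂ t) + f t)) t := by
  intro t ht
  have hd : g₁ t - g₂ t ≠ 0 := sub_ne_zero.mpr (hne t ht)
  have h1 := hsys₁ t ht
  have h2 := hsys₂ t ht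
  constructor
  · have : y₁' t + y₂' t = g₁ t * y₁ t + g₂ t * y₂ t := by
      have : (g₁ t - g₂ t) * (y₁' t + y₂' t) = (g₁ t - g₂ t) * (g₁ t * y₁ t + g₂ t * y₂ t) := by
        linear_combination h1 + h2
      exact mul_left_cancel₀ hd this
    simpa [this] using (hy₁ t ht).fun_add (hy₂ t ht)
  · have heq : g₁' t * y₁ t + g₁ t * y₁' t + (g₂' t * y₂ t + g₂ t * y₂' t) =
      -(f₁ t * (g₁ t * y₁ t + g₂ t * y₂ t) + f₀ t * (y₁ t + y₂ t) + f t) := by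
      apply mul_left_cancel₀ hd
      linear_combination g₁ t * h1 + g₂ t * h2
    simpa [heq] using ((hg₁ t ht).fun_mul (hy₁ t ht)).fun_add ((hg₂ t ht).fun_mul (hy₂ t ht))
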